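/- Let m be a fast sequence and define g(i) = 2·(m°(i))^{i^i}. Then the sequence of real numbers i ↦ m(i)^{1 − 1/g(i)} / log(m(i)) tends to +∞ as i → ∞; equivalently, setting p_i = m(i)^{−1/g(i)}, the sequence p_i · m(i) / log(m(i)) tends to +∞. -/

import Mathlib

/-- `mCirc m i = ∏_{j<i} m j` (so `mCirc m 0 = 1`). -/
def mCirc (m : ℕ → ℕ) (i : ℕ) : ℕ := ∏ j ∈ Finset.range i, m j

/-- A *fast sequence* is `m : ℕ → ℕ` with `m 0 ≥ 2` and
`m i ≥ ((m°(i))^(i^i))^(4·(m°(i))^(i^i))` for all `i`. -/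
def FastSeq (m : ℕ → ℕ) : Prop :=
  2 ≤ m 0 ∧ ∀ i, (mCirc m i ^ i ^ i) ^ (4 * mCirc m i ^ i ^ i) ≤ m i

/-- `g i = 2·(m°(i))^(i^i)`, as a real number. -/
noncomputable def gFun (m : ℕ → ℕ) (i : ℕ) : ℝ := 2 * (mCirc m i : ℝ) ^ (i ^ i)

lemma fastSeq_two_le (m : ℕ → ℕ) (hm : FastSeq m) : ∀ i, 2 ≤ m i := by
  intro i
  induction i using Nat.strong_induction_on with
  | _ i ih =>
    match i with
    | 0 => exact hm.1
    | (k+1) =>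
      have hc : 2 ≤ mCirc m (k+1) := by
        have h0 : (0:ℕ) ∈ Finset.range (k+1) := Finset.mem_range.2 (Nat.succ_pos k)
        calc 2 ≤ m 0 := hm.1
        _ ≤ ∏ j ∈ Finset.range (k+1), m j :=
            Finset.single_le_prod' (fun j hj => le_trans (by norm_num)
              (ih j (Finset.mem_range.1 hj))) h0
      set G := mCirc m (k+1) ^ (k+1) ^ (k+1) with hG
      have hGe : 2 ≤ G := by
        calc (2:ℕ) = 2 ^ 1 := by norm_num
        _ ≤ 2 ^ (k+1)^(k+1) := Nat.pow_le_pow_right (by norm_num) (Nat.one_le_pow _ _ (Nat.succ_pos k))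
        _ ≤ G := Nat.pow_le_pow_left hc _
      calc 2 ≤ G := hGe
      _ ≤ G ^ (4 * G) := Nat.le_self_pow (by positivity) _
      _ ≤ m (k+1) := hm.2 (k+1)

lemma fastSeq_pow_le (m : ℕ → ℕ) (hm : FastSeq m) : ∀ i, 2 ^ i ≤ m i := by
  intro i
  have h1 : 2 ^ i ≤ mCirc m i := by
    calc 2 ^ i = ∏ _j ∈ Finset.range i, 2 := by simp
    _ ≤ ∏ j ∈ Finset.range i, m j :=
        Finset.prod_le_prod' (fun j _ => fastSeq_two_le m hm j)
  have hii : i ^ i ≠ 0 := by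
    rcases Nat.eq_zero_or_pos i with h | h
    · simp [h]
    · positivity
  calc 2 ^ i ≤ mCirc m i := h1
  _ ≤ mCirc m i ^ i ^ i := Nat.le_self_pow hii _
  _ ≤ (mCirc m i ^ i ^ i) ^ (4 * mCirc m i ^ i ^ i) := by
      apply Nat.le_self_pow
      have : 1 ≤ mCirc m i := le_trans (Nat.one_le_two_pow) h1
      positivity
  _ ≤ m i := hm.2 i

lemma tendsto_rpow_half_div_log :
    Filter.Tendsto (fun x : ℝ => x ^ (1/2 : ℝ) / Real.log x) Filter.atTop Filter.atTop := by
  have hlog : ∀ᶠ x : ℝ in Filter.atTop, Real.log x ≤ x ^ (1/4 : ℝ) := by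
    have := (isLittleO_log_rpow_atTop (by norm_num : (0:ℝ) < 1/4)).bound one_pos
    filter_upwards [this, Filter.eventually_ge_atTop (1:ℝ)] with x hx hx1
    calc Real.log x ≤ ‖Real.log x‖ := le_abs_self _
    _ ≤ 1 * ‖x ^ (1/4 : ℝ)‖ := hx
    _ = x ^ (1/4 : ℝ) := by
        rw [one_mul, Real.norm_eq_abs, abs_of_nonneg (Real.rpow_nonneg (by linarith) _)]
  refine Filter.tendsto_atTop_mono' _ ?_ (tendsto_rpow_atTop (by norm_num : (0:ℝ) < 1/4))
  filter_upwards [hlog, Filter.eventually_ge_atTop (2:ℝ)] with x hx hx2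
  have hxpos : (0:ℝ) < x := by linarith
  have hlogpos : 0 < Real.log x := Real.log_pos (by linarith)
  calc x ^ (1/4 : ℝ) = x ^ (1/2 : ℝ) / x ^ (1/4 : ℝ) := by
        rw [← Real.rpow_sub hxpos]; norm_num
  _ ≤ x ^ (1/2 : ℝ) / Real.log x := by
      gcongr

/-- For a fast sequence `m` and `g i = 2·(m°(i))^(i^i)`, the sequence
`m(i)^{1 − 1/g(i)} / log m(i)` tends to `+∞`; equivalently, with
`p_i = m(i)^{−1/g(i)}`, the sequence `p_i · m(i) / log m(i)` tends to `+∞`. -/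
theorem fastSeq_tendsto_pow_div_log (m : ℕ → ℕ) (hm : FastSeq m) :
    Filter.Tendsto
      (fun i : ℕ => (m i : ℝ) ^ ((1 : ℝ) - 1 / gFun m i) / Real.log (m i))
      Filter.atTop Filter.atTop ∧
    Filter.Tendsto
      (fun i : ℕ => ((m i : ℝ) ^ (-(1 : ℝ) / gFun m i) * m i) / Real.log (m i))
      Filter.atTop Filter.atTop := by
  have htwo : ∀ i, (2:ℝ) ≤ (m i : ℝ) := fun i => by
    exact_mod_cast fastSeq_two_le m hm i
  have hmtop : Filter.Tendsto (fun i : ℕ => (m i : ℝ)) Filter.atTop Filter.atTop := by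
    apply Filter.tendsto_atTop_mono (fun i => ?_) tendsto_natCast_atTop_atTop
    have : (i:ℝ) ≤ (2:ℝ)^i := by
      exact_mod_cast (Nat.lt_two_pow_self (n := i)).le
    refine this.trans ?_
    exact_mod_cast fastSeq_pow_le m hm i
  have hg2 : ∀ i, (2:ℝ) ≤ gFun m i := by
    intro i
    have h0 : 1 ≤ mCirc m i := by
      have : 0 < mCirc m i := Finset.prod_pos fun j _ => lt_of_lt_of_le (by norm_num) (fastSeq_two_le m hm j)
      omega
    have h1 : (1:ℝ) ≤ (mCirc m i : ℝ) ^ (i ^ i) := one_le_pow₀ (by exact_mod_cast h0)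
    unfold gFun; linarith
  have h1 : Filter.Tendsto
      (fun i : ℕ => (m i : ℝ) ^ ((1 : ℝ) - 1 / gFun m i) / Real.log (m i))
      Filter.atTop Filter.atTop := by
    apply Filter.tendsto_atTop_mono (fun i => ?_)
      (tendsto_rpow_half_div_log.comp hmtop)
    have hM : (2:ℝ) ≤ (m i : ℝ) := htwo i
    have hlogpos : 0 < Real.log (m i) := Real.log_pos (by linarith)
    have hexp : (1/2 : ℝ) ≤ 1 - 1 / gFun m i := by
      have := hg2 i
      have hgpos : 0 < gFun m i := by linarith
      have : 1 / gFun m i ≤ 1/2 := by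
        rw [div_le_div_iff₀ hgpos (by norm_num)]; linarith
      linarith
    simp only [Function.comp_apply]
    have hle : (m i : ℝ) ^ (1/2 : ℝ) ≤ (m i : ℝ) ^ ((1:ℝ) - 1 / gFun m i) :=
      Real.rpow_le_rpow_of_exponent_le (by linarith) hexp
    exact div_le_div_of_nonneg_right hle hlogpos.le
  refine ⟨h1, h1.congr fun i => ?_⟩
  have hMpos : (0:ℝ) < (m i : ℝ) := by have := htwo i; linarith
  congr 1
  rw [show ((1:ℝ) - 1 / gFun m i) = (-(1:ℝ)/ gFun m i) + 1 by ring,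
    Real.rpow_add hMpos, Real.rpow_one]
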